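/- Let n ≥ 1, σ > 0, let C, M ∈ ℝ^{n×n} be symmetric, and let U ∈ ℝ^{n×n} be orthogonal and ρ ∈ ℝ^n with C − σM = U·Diag(ρ)·Uᵀ. Define γ_i = (−ρ_i + √(ρ_i² + 4σ))/(2σ) and X* = U·Diag(γ)·Uᵀ. Then X* is symmetric positive definite and minimizes f(X) = ⟨X, C⟩ − log det(X) + (σ/2)‖X − M‖_F² over all symmetric positive definite matrices X; that is, f(X*) ≤ f(X) for every symmetric positive definite X ∈ ℝ^{n×n}. -/

import Mathlib

open Matrix

private lemma aux_logdet_le_trace_sub {n : ℕ} {P : Matrix (Fin n) (Fin n) ℝ}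
    (hP : P.PosDef) : Real.log P.det ≤ P.trace - n := by
  have hH := hP.isHermitian
  have hdet : P.det = ∏ i, hH.eigenvalues i := by
    simpa using hH.det_eq_prod_eigenvalues
  have htrace : P.trace = ∑ i, hH.eigenvalues i := by
    conv_lhs => rw [hH.spectral_theorem]
    rw [Unitary.conjStarAlgAut_apply, Matrix.trace_mul_cycle]
    simp [Unitary.coe_star_mul_self, Matrix.trace_diagonal]
  rw [hdet, htrace, Real.log_prod (fun i _ => (hP.eigenvalues_pos i).ne')]
  calc ∑ i, Real.log (hH.eigenvalues i) ≤ ∑ i, (hH.eigenvalues i - 1) :=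
        Finset.sum_le_sum fun i _ => Real.log_le_sub_one_of_pos (hP.eigenvalues_pos i)
    _ = (∑ i, hH.eigenvalues i) - n := by rw [Finset.sum_sub_distrib]; simp

private lemma aux_posDef_conj {n : ℕ} {A B W : Matrix (Fin n) (Fin n) ℝ}
    (hA : A.PosDef) (hW : W * Bᵀ = 1) : (B * A * Bᵀ).PosDef := by
  have hBH : Bᴴ = Bᵀ := by simp
  refine posDef_iff_dotProduct_mulVec.mpr ⟨?_, fun x hx => ?_⟩
  · have := (hA.posSemidef.mul_mul_conjTranspose_same B).isHermitian
    rwa [hBH] at this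
  · have hBx : Bᵀ *ᵥ x ≠ 0 := by
      intro h
      apply hx
      have : W *ᵥ (Bᵀ *ᵥ x) = x := by rw [mulVec_mulVec, hW, one_mulVec]
      rw [h, mulVec_zero] at this
      exact this.symm
    have h2 := hA.dotProduct_mulVec_pos hBx
    rw [show B * A * Bᵀ = B * A * Bᴴ by rw [hBH]]
    simpa only [star_mulVec, dotProduct_mulVec, vecMul_vecMul, conjTranspose_conjTranspose,
      hBH, show Bᵀᴴ = B by simp] using h2

/-- Closed-form solution of the `X`-subproblem of the GR-PPA applied to the latent
variable Gaussian graphical model selection problem: with `C − σM = U·Diag(ρ)·Uᵀ` and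
`γᵢ = (−ρᵢ + √(ρᵢ² + 4σ))/(2σ)`, the matrix `X* = U·Diag(γ)·Uᵀ` is symmetric positive
definite and minimizes `⟨X, C⟩ − log det X + (σ/2)‖X − M‖_F²` over symmetric positive
definite matrices. -/
theorem X_subproblem_minimizer
    (n : ℕ) (hn : 1 ≤ n) (σ : ℝ) (hσ : 0 < σ)
    (C M : Matrix (Fin n) (Fin n) ℝ) (hC : C.IsSymm) (hM : M.IsSymm)
    (U : Matrix (Fin n) (Fin n) ℝ) (hU : Uᵀ * U = 1)
    (ρ : Fin n → ℝ)
    (hdecomp : C - σ • M = U * Matrix.diagonal ρ * Uᵀ)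
    (Xs : Matrix (Fin n) (Fin n) ℝ)
    (hXs : Xs = U * Matrix.diagonal
        (fun i => (-ρ i + Real.sqrt ((ρ i) ^ 2 + 4 * σ)) / (2 * σ)) * Uᵀ) :
    Xs.PosDef ∧
      ∀ X : Matrix (Fin n) (Fin n) ℝ, X.PosDef →
        (∑ i, ∑ j, Xs i j * C i j) - Real.log Xs.det
            + (σ / 2) * ∑ i, ∑ j, (Xs i j - M i j) ^ 2
          ≤ (∑ i, ∑ j, X i j * C i j) - Real.log X.det
            + (σ / 2) * ∑ i, ∑ j, (X i j - M i j) ^ 2 := by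
  classical
  -- scalar facts about γ
  set γ : Fin n → ℝ := fun i => (-ρ i + Real.sqrt ((ρ i) ^ 2 + 4 * σ)) / (2 * σ) with hγdef
  have hsq : ∀ i, Real.sqrt ((ρ i) ^ 2 + 4 * σ) ^ 2 = (ρ i) ^ 2 + 4 * σ := fun i =>
    Real.sq_sqrt (by positivity)
  have hγpos : ∀ i, 0 < γ i := by
    intro i
    have h1 : |ρ i| < Real.sqrt ((ρ i) ^ 2 + 4 * σ) := by
      nlinarith [Real.sqrt_nonneg ((ρ i) ^ 2 + 4 * σ), hsq i, abs_nonneg (ρ i), sq_abs (ρ i)]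
    have h3 := le_abs_self (ρ i)
    have h2 : 0 < -ρ i + Real.sqrt ((ρ i) ^ 2 + 4 * σ) := by linarith
    positivity
  have hγeq : ∀ i, σ * γ i ^ 2 + ρ i * γ i = 1 := by
    intro i
    have h2σ : (2 * σ) ≠ 0 := by positivity
    rw [hγdef]
    field_simp
    have hsq' := hsq i
    rw [mul_comm 4 σ] at hsq'
    nlinarith [hsq']
  have hγinv : ∀ i, (γ i)⁻¹ = σ * γ i + ρ i := by
    intro i
    have h : (σ * γ i + ρ i) * γ i = 1 := by linear_combination hγeq i
    exact (eq_inv_of_mul_eq_one_left h).symm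
  have hXsd : Xs = U * Matrix.diagonal γ * Uᵀ := hXs
  clear_value γ
  -- orthogonality facts
  have hUUT : U * Uᵀ = 1 := mul_eq_one_comm.mp hU
  have hconj : ∀ a b : Fin n → ℝ, (U * diagonal a * Uᵀ) * (U * diagonal b * Uᵀ)
      = U * diagonal (fun i => a i * b i) * Uᵀ := by
    intro a b
    have h1 : Uᵀ * (U * (diagonal b * Uᵀ)) = diagonal b * Uᵀ := by
      rw [← Matrix.mul_assoc, hU, one_mul]
    simp only [Matrix.mul_assoc, h1, ← diagonal_mul_diagonal]
  have hsymQ : ∀ a : Fin n → ℝ, (U * diagonal a * Uᵀ)ᵀ = U * diagonal a * Uᵀ := by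
    intro a
    simp [transpose_mul, diagonal_transpose, Matrix.mul_assoc]
  -- useful matrices
  set g : Fin n → ℝ := fun i => Real.sqrt (γ i) with hgdef
  have hg2 : ∀ i, g i * g i = γ i := fun i => Real.mul_self_sqrt (hγpos i).le
  have hgpos : ∀ i, 0 < g i := fun i => Real.sqrt_pos.mpr (hγpos i)
  set T : Matrix (Fin n) (Fin n) ℝ := U * diagonal (fun i => (g i)⁻¹) * Uᵀ with hTdef
  set S : Matrix (Fin n) (Fin n) ℝ := U * diagonal g * Uᵀ with hSdef
  set Y : Matrix (Fin n) (Fin n) ℝ := U * diagonal (fun i => (γ i)⁻¹) * Uᵀ with hYdef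
  have hST : S * T = 1 := by
    rw [hSdef, hTdef, hconj]
    have : (fun i => g i * (g i)⁻¹) = fun _ : Fin n => (1 : ℝ) := by
      funext i; exact mul_inv_cancel₀ (hgpos i).ne'
    rw [this, diagonal_one, mul_one, hUUT]
  have hTT : T * T = Y := by
    have hfun : (fun i => (g i)⁻¹ * (g i)⁻¹) = fun i => (γ i)⁻¹ := by
      funext i; rw [← mul_inv, hg2]
    rw [hTdef, hYdef, hconj, hfun]
  have hTsym : Tᵀ = T := hsymQ _
  have hYsym : Yᵀ = Y := hsymQ _
  have hXsY : Xs * Y = 1 := by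
    rw [hXsd, hYdef, hconj]
    have : (fun i => γ i * (γ i)⁻¹) = fun _ : Fin n => (1 : ℝ) := by
      funext i; exact mul_inv_cancel₀ (hγpos i).ne'
    rw [this, diagonal_one, mul_one, hUUT]
  have hYval : Y = σ • Xs + (C - σ • M) := by
    rw [hdecomp, hXsd, hYdef]
    have h1 : (fun i => (γ i)⁻¹) = fun i => σ * γ i + ρ i := funext hγinv
    rw [h1]
    have h2 : diagonal (fun i => σ * γ i + ρ i)
        = σ • diagonal γ + diagonal ρ := by
      rw [← diagonal_add, ← diagonal_smul]
      rfl
    rw [h2, Matrix.mul_add, Matrix.add_mul, mul_smul_comm, smul_mul_assoc]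
  -- Xs is positive definite
  have hXsPD : Xs.PosDef := by
    rw [hXsd]
    exact aux_posDef_conj (Matrix.PosDef.diagonal hγpos) hUUT
  refine ⟨hXsPD, fun X hX => ?_⟩
  -- the conjugated matrix
  have hSTT : S * Tᵀ = 1 := by rw [hTsym]; exact hST
  have hPPD : (T * X * Tᵀ).PosDef := aux_posDef_conj hX hSTT
  set P : Matrix (Fin n) (Fin n) ℝ := T * X * Tᵀ with hPdef
  have hXsdetpos : 0 < Xs.det := hXsPD.det_pos
  have hXdetpos : 0 < X.det := hX.det_pos
  have hYdet : Y.det = Xs.det⁻¹ := by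
    have h := congrArg Matrix.det hXsY
    rw [det_mul, det_one] at h
    exact eq_inv_of_mul_eq_one_right h
  have hdetP : P.det = X.det * Xs.det⁻¹ := by
    have h1 : P.det = T.det * X.det * T.det := by
      rw [hPdef, det_mul, det_mul, det_transpose]
    have h2 : T.det * T.det = Y.det := by
      have := congrArg Matrix.det hTT
      rwa [det_mul] at this
    rw [h1, ← hYdet]
    nlinarith [h2]
  have hlogP : Real.log P.det = Real.log X.det - Real.log Xs.det := by
    rw [hdetP, Real.log_mul hXdetpos.ne' (inv_pos.mpr hXsdetpos).ne', Real.log_inv]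
    ring
  have htrP : P.trace = (X * Y).trace := by
    rw [hPdef, hTsym, Matrix.trace_mul_cycle T X T, hTT, trace_mul_comm]
  have hkey : Real.log X.det - Real.log Xs.det ≤ (X * Y).trace - n := by
    have h := aux_logdet_le_trace_sub hPPD
    rwa [hlogP, htrP] at h
  -- sums and traces
  have htrsum : ∀ A : Matrix (Fin n) (Fin n) ℝ,
      ∑ i, ∑ j, A i j * Y i j = (A * Y).trace := by
    intro A
    rw [Matrix.trace]
    refine Finset.sum_congr rfl fun i _ => ?_
    rw [Matrix.diag_apply, Matrix.mul_apply]
    refine Finset.sum_congr rfl fun j _ => ?_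
    have : Y j i = Y i j := by
      conv_lhs => rw [← hYsym]
      rfl
    rw [this]
  have htrXsY : (Xs * Y).trace = (n : ℝ) := by
    rw [hXsY, trace_one]
    simp
  have hsumY : ∑ i, ∑ j, (X i j - Xs i j) * Y i j = (X * Y).trace - n := by
    have h1 : ∑ i, ∑ j, (X i j - Xs i j) * Y i j
        = (∑ i, ∑ j, X i j * Y i j) - ∑ i, ∑ j, Xs i j * Y i j := by
      rw [← Finset.sum_sub_distrib]
      refine Finset.sum_congr rfl fun i _ => ?_
      rw [← Finset.sum_sub_distrib]
      refine Finset.sum_congr rfl fun j _ => ?_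
      ring
    rw [h1, htrsum X, htrsum Xs, htrXsY]
  -- entrywise identity
  have hYent : ∀ i j, Y i j = C i j + σ * (Xs i j - M i j) := by
    intro i j
    rw [hYval]
    simp [Matrix.add_apply, Matrix.sub_apply, Matrix.smul_apply, smul_eq_mul]
    ring
  have halg : ((∑ i, ∑ j, X i j * C i j) + (σ / 2) * ∑ i, ∑ j, (X i j - M i j) ^ 2)
      - ((∑ i, ∑ j, Xs i j * C i j) + (σ / 2) * ∑ i, ∑ j, (Xs i j - M i j) ^ 2)
      = (∑ i, ∑ j, (X i j - Xs i j) * Y i j)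
        + (σ / 2) * ∑ i, ∑ j, (X i j - Xs i j) ^ 2 := by
    simp only [Finset.mul_sum, ← Finset.sum_add_distrib, ← Finset.sum_sub_distrib]
    refine Finset.sum_congr rfl fun i _ => Finset.sum_congr rfl fun j _ => ?_
    rw [hYent i j]
    ring
  have hQ : 0 ≤ (σ / 2) * ∑ i, ∑ j, (X i j - Xs i j) ^ 2 := by positivity
  linarith [hkey, halg, hQ, hsumY]
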